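/- Let (A_n)_{n≥0}, (B_n)_{n≥0}, (C_n)_{n≥1} be real sequences with A_n ≠ 0 for all n, set C_0 := 0, and let λ_1,…,λ_m be nonzero reals with λ_m = 1; put u_{jk}(n) = (A_{n_j} λ_j)/(A_{n_k} λ_k). Suppose y, y' : ℕ^m → ℝ both satisfy: (i) for all n ∈ ℕ^m and all j ≠ k in {1,…,m}, y_j^+(n) − u_{jk}(n) y_k^+(n) = (B_{n_j} − u_{jk}(n) B_{n_k}) y(n) − C_{n_j} y_j^-(n) + u_{jk}(n) C_{n_k} y_k^-(n) (the terms with C_{n_j} resp. C_{n_k} being omitted when n_j = 0 resp. n_k = 0); (ii) y(0,…,0) = 1; (iii) y(n) = 0 whenever n_1 + ⋯ + n_{m-1} < n_m; (iv) for every j with 1 ≤ j ≤ m−1, the value of y at the tuple with 1 in position j, n in position m, and 0 elsewhere equals λ_j C_1 A_0/A_1 if n = 1 and B_0(1 − λ_j) if n = 0. Then y = y', i.e. the system together with these boundary conditions admits at most one solution. -/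

import Mathlib

open Finset

namespace Paper

/-- `y` solves the difference system \eqref{eqIplusminusy} together with the
boundary conditions \eqref{eqsys}.  Here there are `m + 1` boxes, indexed by
`Fin (m+1)`, the last one playing the role of the index `m` of the paper;
`u_{jk}(n) = (A_{n_j} λ_j)/(A_{n_k} λ_k)`, and `C 0 = 0` is assumed, so the
terms with `C_{n_j}` vanish automatically when `n_j = 0`. -/
def IsSolution (m : ℕ) (A B C : ℕ → ℝ) (lam : Fin (m + 1) → ℝ)
    (y : (Fin (m + 1) → ℕ) → ℝ) : Prop :=
  -- the difference system
  (∀ (n : Fin (m + 1) → ℕ) (j k : Fin (m + 1)), j ≠ k →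
    y (Function.update n j (n j + 1))
        - (A (n j) * lam j) / (A (n k) * lam k) * y (Function.update n k (n k + 1))
      = (B (n j) - (A (n j) * lam j) / (A (n k) * lam k) * B (n k)) * y n
          - C (n j) * y (Function.update n j (n j - 1))
          + (A (n j) * lam j) / (A (n k) * lam k) * C (n k)
              * y (Function.update n k (n k - 1))) ∧
  -- y(0,…,0) = 1
  y (fun _ => 0) = 1 ∧
  -- y(n) = 0 whenever n_1 + ⋯ + n_{m-1} < n_m
  (∀ n : Fin (m + 1) → ℕ,
    (∑ j ∈ (Finset.univ : Finset (Fin (m + 1))).erase (Fin.last m), n j) < n (Fin.last m) →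
      y n = 0) ∧
  -- boundary values of y at (0,…,1_{(j)},…,0,n) for n = 0, 1
  (∀ j : Fin (m + 1), j ≠ Fin.last m →
    y (Function.update (fun _ => 0) j 1) = B 0 * (1 - lam j) ∧
    y (Function.update (Function.update (fun _ => 0) (Fin.last m) 1) j 1)
      = lam j * C 1 * A 0 / A 1)

/-- the difference system together with the boundary conditions has
at most one solution. -/
theorem uniqueness_of_solution (m : ℕ) (A B C : ℕ → ℝ) (hA : ∀ n, A n ≠ 0)
    (hC0 : C 0 = 0) (lam : Fin (m + 1) → ℝ) (hlam : ∀ j, lam j ≠ 0)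
    (hlamlast : lam (Fin.last m) = 1)
    (y y' : (Fin (m + 1) → ℕ) → ℝ)
    (hy : IsSolution m A B C lam y) (hy' : IsSolution m A B C lam y') :
    y = y' := by
  obtain ⟨heq, h0, hvan, -⟩ := hy
  obtain ⟨heq', h0', hvan', -⟩ := hy'
  funext n
  set w : Fin (m + 1) → ℕ := fun j => if j = Fin.last m then 1 else 2 with hw
  -- sum-update helper
  have hsum : ∀ (f : Fin (m + 1) → ℕ) (i : Fin (m + 1)) (v : ℕ),
      (∑ x, w x * Function.update f i v x) + w i * f i = (∑ x, w x * f x) + w i * v := by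
    intro f i v
    have h1 : (fun x => w x * Function.update f i v x)
        = Function.update (fun x => w x * f x) i (w i * v) := by
      funext x
      by_cases h : x = i <;> simp [Function.update, h]
    rw [h1, Finset.sum_update_of_mem (Finset.mem_univ i),
      ← Finset.add_sum_erase _ (fun x => w x * f x) (Finset.mem_univ i),
      Finset.sdiff_singleton_eq_erase]
    ring
  suffices key : ∀ M : ℕ, ∀ n : Fin (m + 1) → ℕ, (∑ j, w j * n j) ≤ M → y n = y' n by
    exact key _ n le_rfl
  intro M
  induction M with
  | zero =>
    intro n hn
    have hz : n = fun _ => 0 := by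
      funext j
      have h1 := Finset.sum_eq_zero_iff.mp (Nat.le_zero.mp hn) j (Finset.mem_univ j)
      have h2 : w j ≠ 0 := by
        simp only [hw]
        split <;> omega
      exact Nat.mul_eq_zero.mp h1 |>.resolve_left h2
    rw [hz, h0, h0']
  | succ M ih =>
    intro n hn
    by_cases hjex : ∃ j, j ≠ Fin.last m ∧ 1 ≤ n j
    · obtain ⟨j, hj, hj1⟩ := hjex
      set n'' : Fin (m + 1) → ℕ := Function.update n j (n j - 1) with hn''
      have hwj : w j = 2 := by simp [hw, hj]
      have hwl : w (Fin.last m) = 1 := by simp [hw]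
      have hup : Function.update n'' j (n'' j + 1) = n := by
        rw [hn'', Function.update_idem, Function.update_self]
        rw [Nat.sub_add_cancel hj1, Function.update_eq_self]
      -- weighted sums of the reference points
      have s1 := hsum n j (n j - 1)
      rw [← hn''] at s1
      have hμn'' : (∑ x, w x * n'' x) + 2 ≤ ∑ x, w x * n x := by
        rw [hwj] at s1; omega
      have s2 := hsum n'' (Fin.last m) (n'' (Fin.last m) + 1)
      have s3 := hsum n'' j (n'' j - 1)
      have s4 := hsum n'' (Fin.last m) (n'' (Fin.last m) - 1)
      rw [hwl] at s2 s4
      rw [hwj] at s3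
      have e1 : y n'' = y' n'' := ih n'' (by omega)
      have e2 : y (Function.update n'' (Fin.last m) (n'' (Fin.last m) + 1))
          = y' (Function.update n'' (Fin.last m) (n'' (Fin.last m) + 1)) := ih _ (by omega)
      have e3 : y (Function.update n'' j (n'' j - 1))
          = y' (Function.update n'' j (n'' j - 1)) := ih _ (by omega)
      have e4 : y (Function.update n'' (Fin.last m) (n'' (Fin.last m) - 1))
          = y' (Function.update n'' (Fin.last m) (n'' (Fin.last m) - 1)) := ih _ (by omega)
      have E := heq n'' j (Fin.last m) hj
      have E' := heq' n'' j (Fin.last m) hj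
      rw [hup] at E E'
      rw [e1, e2, e3, e4] at E
      linarith [E, E']
    · push_neg at hjex
      by_cases hlast : n (Fin.last m) = 0
      · have hz : n = fun _ => 0 := by
          funext j
          by_cases h : j = Fin.last m
          · rw [h]; exact hlast
          · have := hjex j h; omega
        rw [hz, h0, h0']
      · have hz : (∑ j ∈ (Finset.univ : Finset (Fin (m + 1))).erase (Fin.last m), n j) = 0 :=
          Finset.sum_eq_zero fun j hjm => by
            have := hjex j (Finset.mem_erase.mp hjm).1; omega
        have hlt : (∑ j ∈ (Finset.univ : Finset (Fin (m + 1))).erase (Fin.last m), n j)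
            < n (Fin.last m) := by omega
        rw [hvan n hlt, hvan' n hlt]

end Paper
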